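/- Let ψ be a continuous idempotent endomorphism of a profinite group F generated (topologically) by a subset A. Then the kernel of ψ equals the closed normal subgroup of F generated by the set {ψ(a)a^{-1} : a ∈ A}; in particular the image of ψ is isomorphic to F modulo this closed normal subgroup. -/

import Mathlib

theorem stmt_10 {F : Type*} [Group F] [TopologicalSpace F] [IsTopologicalGroup F]
    [CompactSpace F] [TotallyDisconnectedSpace F] [T2Space F]
    (A : Set F) (hA : (Subgroup.closure A).topologicalClosure = ⊤)
    (ψ : F →* F) (hcont : Continuous ψ) (hidem : ψ.comp ψ = ψ) :
    MonoidHom.ker ψ =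
        (Subgroup.normalClosure {x | ∃ a ∈ A, x = ψ a * a⁻¹}).topologicalClosure ∧
      (letI := (Subgroup.is_normal_topologicalClosure
          (Subgroup.normalClosure {x | ∃ a ∈ A, x = ψ a * a⁻¹}));
        Nonempty
          ((F ⧸ (Subgroup.normalClosure {x | ∃ a ∈ A, x = ψ a * a⁻¹}).topologicalClosure) ≃*
            MonoidHom.range ψ)) := by
  set S : Set F := {x | ∃ a ∈ A, x = ψ a * a⁻¹} with hS
  set N : Subgroup F := (Subgroup.normalClosure S).topologicalClosure with hN
  haveI : N.Normal := Subgroup.is_normal_topologicalClosure _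
  haveI : IsClosed (N : Set F) := Subgroup.isClosed_topologicalClosure _
  have hidem' : ∀ x, ψ (ψ x) = ψ x := fun x => DFunLike.congr_fun hidem x
  -- N ≤ ker ψ
  have hNker : N ≤ MonoidHom.ker ψ := by
    have hker_closed : IsClosed ((MonoidHom.ker ψ : Subgroup F) : Set F) := by
      have : (MonoidHom.ker ψ : Set F) = ψ ⁻¹' {1} := rfl
      rw [this]
      exact IsClosed.preimage hcont isClosed_singleton
    have h1 : Subgroup.normalClosure S ≤ MonoidHom.ker ψ := by
      apply Subgroup.normalClosure_le_normal
      rintro x ⟨a, _, rfl⟩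
      simp [MonoidHom.mem_ker, hidem' a]
    intro x hx
    have := closure_mono (Set.image_subset_iff.mp (by
      intro y hy; exact h1 (by simpa using hy) : (id '' (Subgroup.normalClosure S : Set F)) ⊆ (MonoidHom.ker ψ : Set F)))
    have hx' : x ∈ closure ((Subgroup.normalClosure S : Subgroup F) : Set F) := hx
    have : closure ((Subgroup.normalClosure S : Subgroup F) : Set F) ⊆ (MonoidHom.ker ψ : Set F) :=
      hker_closed.closure_subset_iff.mpr h1
    exact this hx'
  -- ker ψ ≤ N : compare π and π ∘ ψ
  have hkerN : MonoidHom.ker ψ ≤ N := by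
    set π : F →* F ⧸ N := QuotientGroup.mk' N
    have hπcont : Continuous π := continuous_quot_mk
    have hagree : ∀ a ∈ A, π (ψ a) = π a := by
      intro a ha
      have hmem : ψ a * a⁻¹ ∈ N :=
        Subgroup.le_topologicalClosure _ (Subgroup.subset_normalClosure ⟨a, ha, rfl⟩)
      have : π (ψ a * a⁻¹) = 1 := (QuotientGroup.eq_one_iff _).mpr hmem
      rw [map_mul, map_inv] at this
      exact eq_of_div_eq_one (by simpa [div_eq_mul_inv] using this)
    have heq : ∀ x, π (ψ x) = π x := by
      have hcl : Set.EqOn (π.comp ψ) π ((Subgroup.closure A : Subgroup F) : Set F) := by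
        intro x hx
        induction hx using Subgroup.closure_induction with
        | mem a ha => exact hagree a ha
        | one => simp
        | mul a b _ _ iha ihb => simp only [MonoidHom.comp_apply, map_mul] at *; rw [iha, ihb]
        | inv a _ iha => simp only [MonoidHom.comp_apply, map_inv] at *; rw [iha]
      have hclosed : IsClosed {x | (π.comp ψ) x = π x} :=
        isClosed_eq (hπcont.comp hcont) hπcont
      have hdense : closure ((Subgroup.closure A : Subgroup F) : Set F) = Set.univ := by
        have := congrArg (fun (H : Subgroup F) => (H : Set F)) hA
        exact this
      intro x
      have : x ∈ closure ((Subgroup.closure A : Subgroup F) : Set F) := by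
        rw [hdense]; trivial
      exact hclosed.closure_subset_iff.mpr hcl this
    intro x hx
    have hx1 : ψ x = 1 := hx
    have : π x = 1 := by rw [← heq x, hx1, map_one]
    exact (QuotientGroup.eq_one_iff _).mp this
  have hkereq : MonoidHom.ker ψ = N := le_antisymm hkerN hNker
  refine ⟨hkereq, ?_⟩
  exact ⟨((QuotientGroup.quotientMulEquivOfEq hkereq.symm).trans
    (QuotientGroup.quotientKerEquivRange ψ))⟩
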